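/- Let v : ℝ → ℝ be continuous with v(x + T) = v(x) for all x, where T > 0, and let E ∈ ℝ. Let f₁, f₂ : ℝ → ℝ be twice differentiable solutions of −f'' + (v − E) f = 0 with f₁(0) = 1, f₁'(0) = 0, f₂(0) = 0, f₂'(0) = 1. If |f₁(T) + f₂'(T)| > 2, then there exists a twice differentiable solution f : ℝ → ℝ of −f'' + (v − E) f = 0 that is unbounded on ℝ. -/

import Mathlib

open Set Real

private lemma ode2_zero (w : ℝ → ℝ) (hw : Continuous w) (h : ℝ → ℝ)
    (hd : Differentiable ℝ h) (hd' : Differentiable ℝ (deriv h))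
    (heq : ∀ x, deriv (deriv h) x = w x * h x)
    (h0 : h 0 = 0) (h0' : deriv h 0 = 0) : ∀ x, h x = 0 := by
  intro x
  set n : ℝ := |x| + 1 with hn
  have hn1 : 1 ≤ n := by nlinarith [abs_nonneg x]
  have hxmem : x ∈ Ioo (-n) n := by
    constructor <;> [nlinarith [abs_nonneg x, neg_abs_le x]; nlinarith [le_abs_self x]]
  have h0mem : (0:ℝ) ∈ Ioo (-n) n := by constructor <;> nlinarith
  obtain ⟨C, hC⟩ := (isCompact_Icc (a := -n) (b := n)).exists_bound_of_continuousOn hw.continuousOn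
  have hC1 : (0:ℝ) ≤ max C 1 := by positivity
  set K : NNReal := ⟨max C 1, hC1⟩ with hK
  set proj : ℝ → ℝ := fun t => max (-n) (min n t) with hproj
  set F : ℝ → ℝ × ℝ → ℝ × ℝ := fun t p => (p.2, w (proj t) * p.1) with hF
  have hlip : ∀ t, LipschitzOnWith K (F t) univ := by
    intro t
    apply LipschitzWith.lipschitzOnWith
    rw [lipschitzWith_iff_dist_le_mul]
    intro p q
    have hpt : proj t ∈ Icc (-n) n := by
      constructor
      · exact le_max_left _ _
      · exact max_le (by linarith) (min_le_left _ _)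
    have hcb : |w (proj t)| ≤ C := hC _ hpt
    rw [Prod.dist_eq, Prod.dist_eq]
    have hd1 : dist p.1 q.1 ≤ max (dist p.1 q.1) (dist p.2 q.2) := le_max_left _ _
    have hd2 : dist p.2 q.2 ≤ max (dist p.1 q.1) (dist p.2 q.2) := le_max_right _ _
    have hKval : (K : ℝ) = max C 1 := rfl
    apply max_le
    · calc dist (F t p).1 (F t q).1 = dist p.2 q.2 := rfl
        _ ≤ 1 * max (dist p.1 q.1) (dist p.2 q.2) := by linarith
        _ ≤ (K:ℝ) * max (dist p.1 q.1) (dist p.2 q.2) := by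
            apply mul_le_mul_of_nonneg_right _ (le_max_iff.2 (Or.inl dist_nonneg))
            rw [hKval]; exact le_max_right _ _
    · calc dist (F t p).2 (F t q).2 = |w (proj t)| * dist p.1 q.1 := by
            simp only [hF, Real.dist_eq, ← abs_mul]; ring_nf
        _ ≤ (K:ℝ) * max (dist p.1 q.1) (dist p.2 q.2) := by
            apply mul_le_mul (le_trans hcb (by rw [hKval]; exact le_max_left _ _)) hd1
              dist_nonneg (by rw [hKval]; linarith)
  set u : ℝ → ℝ × ℝ := fun t => (h t, deriv h t) with hu
  have hueq : EqOn u (fun _ => ((0:ℝ), (0:ℝ))) (Ioo (-n) n) := by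
    apply ODE_solution_unique_of_mem_Ioo (fun t _ => hlip t) h0mem
    · intro t ht
      refine ⟨?_, trivial⟩
      have hpt : proj t = t := by
        rw [hproj]; simp only []
        rw [min_eq_right ht.2.le, max_eq_right ht.1.le]
      have : HasDerivAt u (deriv h t, deriv (deriv h) t) t :=
        (hd t).hasDerivAt.prodMk (hd' t).hasDerivAt
      refine this.congr_deriv ?_
      simp [hF, hu, hpt, heq t]
    · intro t ht
      refine ⟨?_, trivial⟩
      simpa [hF, Prod.mk_zero_zero] using (hasDerivAt_const t ((0:ℝ),(0:ℝ)))
    · simp [hu, h0, h0']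
  have := hueq hxmem
  simpa [hu] using congrArg Prod.fst this

theorem unbounded_solution_from_large_trace
    (T E : ℝ) (hT : 0 < T) (v : ℝ → ℝ) (hv : Continuous v)
    (hvper : ∀ x, v (x + T) = v x)
    (f₁ f₂ : ℝ → ℝ)
    (hd₁ : Differentiable ℝ f₁) (hd₁' : Differentiable ℝ (deriv f₁))
    (hd₂ : Differentiable ℝ f₂) (hd₂' : Differentiable ℝ (deriv f₂))
    (he₁ : ∀ x, -(deriv (deriv f₁) x) + (v x - E) * f₁ x = 0)
    (he₂ : ∀ x, -(deriv (deriv f₂) x) + (v x - E) * f₂ x = 0)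
    (h₁0 : f₁ 0 = 1) (h₁0' : deriv f₁ 0 = 0)
    (h₂0 : f₂ 0 = 0) (h₂0' : deriv f₂ 0 = 1)
    (htr : |f₁ T + deriv f₂ T| > 2) :
    ∃ f : ℝ → ℝ, Differentiable ℝ f ∧ Differentiable ℝ (deriv f) ∧
      (∀ x, -(deriv (deriv f) x) + (v x - E) * f x = 0) ∧
      ¬(∃ C, ∀ x, |f x| ≤ C) := by
  have he₁' : ∀ x, deriv (deriv f₁) x = (v x - E) * f₁ x := fun x => by linarith [he₁ x]
  have he₂' : ∀ x, deriv (deriv f₂) x = (v x - E) * f₂ x := fun x => by linarith [he₂ x]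
  set α := f₁ T with hα
  set β := f₂ T with hβ
  set γ := deriv f₁ T with hγ
  set δ := deriv f₂ T with hδ
  -- Wronskian is constant = 1
  have hW : α * δ - γ * β = 1 := by
    set W : ℝ → ℝ := fun x => f₁ x * deriv f₂ x - deriv f₁ x * f₂ x with hWdef
    have hWd : Differentiable ℝ W := (hd₁.mul hd₂').sub (hd₁'.mul hd₂)
    have hWderiv : ∀ x, deriv W x = 0 := by
      intro x
      have h1 : HasDerivAt W (deriv f₁ x * deriv f₂ x + f₁ x * deriv (deriv f₂) x -
          (deriv (deriv f₁) x * f₂ x + deriv f₁ x * deriv f₂ x)) x :=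
        ((hd₁ x).hasDerivAt.mul (hd₂' x).hasDerivAt).sub
          ((hd₁' x).hasDerivAt.mul (hd₂ x).hasDerivAt)
      rw [h1.deriv, he₁' x, he₂' x]; ring
    have := is_const_of_deriv_eq_zero hWd hWderiv T 0
    simp only [hWdef, h₁0, h₁0', h₂0, h₂0'] at this
    rw [hα, hδ, hγ, hβ]; linarith
  set t := α + δ with ht
  have htr2 : t ^ 2 > 4 := by
    rcases abs_cases t with ⟨h1, _⟩ | ⟨h1, _⟩ <;> nlinarith [htr]
  set d := Real.sqrt (t ^ 2 - 4) with hd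
  have hd2 : d ^ 2 = t ^ 2 - 4 := Real.sq_sqrt (by linarith)
  have hdpos : 0 < d := Real.sqrt_pos.2 (by linarith)
  set μ := (t + (if 0 < t then d else -d)) / 2 with hμdef
  have hμ2 : μ ^ 2 - t * μ + 1 = 0 := by
    rcases ite_eq_or_eq (0 < t) d (-d) with h | h <;> rw [hμdef, h] <;> linear_combination hd2 / 4
  have hμabs : 1 < |μ| := by
    by_cases hpos : 0 < t
    · have htgt : t > 2 := by rcases abs_cases t with ⟨h1,_⟩|⟨h1,_⟩ <;> linarith
      have hμeq : μ = (t + d) / 2 := by rw [hμdef, if_pos hpos]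
      calc (1:ℝ) < (t+d)/2 := by linarith
        _ ≤ |(t+d)/2| := le_abs_self _
        _ = |μ| := by rw [hμeq]
    · have htlt : t < -2 := by rcases abs_cases t with ⟨h1,_⟩|⟨h1,_⟩ <;> linarith
      have hμeq : μ = (t - d) / 2 := by rw [hμdef, if_neg hpos]; ring
      calc (1:ℝ) < -((t-d)/2) := by linarith
        _ ≤ |(t-d)/2| := neg_le_abs _
        _ = |μ| := by rw [hμeq]
  have hμne : μ ^ 2 ≠ 1 := by
    intro hcon
    have : |μ| ^ 2 = 1 := by rw [sq_abs]; exact hcon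
    nlinarith
  -- eigenvector (a, b) for the monodromy matrix, eigenvalue μ
  obtain ⟨a, b, hab, hev1, hev2⟩ :
      ∃ a b : ℝ, (a ≠ 0 ∨ b ≠ 0) ∧ a * α + b * β = μ * a ∧ a * γ + b * δ = μ * b := by
    by_cases hc : β = 0 ∧ α = μ
    · refine ⟨μ - δ, γ, ?_, ?_, by ring⟩
      · by_contra hcon
        push_neg at hcon
        obtain ⟨h1, h2⟩ := hcon
        have h1' : μ - δ = 0 := not_not.1 (by simpa using h1)
        have h2' : γ = 0 := not_not.1 (by simpa using h2)
        exact hμne (by linear_combination hW + γ * hc.1 - δ * hc.2 + μ * h1')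
      · linear_combination -hμ2 - hW - μ * ht
    · refine ⟨β, μ - α, ?_, by ring, by linear_combination -hμ2 - hW - μ * ht⟩
      by_cases hb0 : β = 0
      · right
        intro hcon
        exact hc ⟨hb0, (sub_eq_zero.1 hcon).symm⟩
      · left; exact hb0
  -- the Floquet solution
  set f : ℝ → ℝ := fun x => a * f₁ x + b * f₂ x with hf
  have hdf : Differentiable ℝ f := (hd₁.const_mul a).add (hd₂.const_mul b)
  have hderivf : deriv f = fun x => a * deriv f₁ x + b * deriv f₂ x := by
    funext x
    exact (((hd₁ x).hasDerivAt.const_mul a).add ((hd₂ x).hasDerivAt.const_mul b)).deriv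
  have hdf' : Differentiable ℝ (deriv f) := by
    rw [hderivf]; exact (hd₁'.const_mul a).add (hd₂'.const_mul b)
  have hderivf2 : ∀ x, deriv (deriv f) x = (v x - E) * f x := by
    intro x
    have h1 : HasDerivAt (deriv f) (a * deriv (deriv f₁) x + b * deriv (deriv f₂) x) x := by
      rw [hderivf]
      exact ((hd₁' x).hasDerivAt.const_mul a).add ((hd₂' x).hasDerivAt.const_mul b)
    rw [h1.deriv, he₁' x, he₂' x, hf]; ring
  have hfeq : ∀ x, -(deriv (deriv f) x) + (v x - E) * f x = 0 := fun x => by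
    rw [hderivf2 x]; ring
  refine ⟨f, hdf, hdf', hfeq, ?_⟩
  -- f(x+T) = μ f(x)
  have hstep : ∀ x, f (x + T) = μ * f x := by
    set h : ℝ → ℝ := fun x => f (x + T) - μ * f x with hh
    have hdsh : Differentiable ℝ (fun x => f (x + T)) :=
      hdf.comp (differentiable_id.add_const T)
    have hdh : Differentiable ℝ h := (hdsh).sub (hdf.const_mul μ)
    have hderivh : deriv h = fun x => deriv f (x + T) - μ * deriv f x := by
      funext x
      have h1 : HasDerivAt (fun x => f (x + T)) (deriv f (x + T)) x :=
        ((hdf (x + T)).hasDerivAt).comp_add_const x T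
      exact (h1.sub ((hdf x).hasDerivAt.const_mul μ)).deriv
    have hdh' : Differentiable ℝ (deriv h) := by
      rw [hderivh]
      exact (hdf'.comp (differentiable_id.add_const T)).sub (hdf'.const_mul μ)
    have hh2 : ∀ x, deriv (deriv h) x = (v x - E) * h x := by
      intro x
      have h1 : HasDerivAt (deriv h) (deriv (deriv f) (x + T) - μ * deriv (deriv f) x) x := by
        rw [hderivh]
        exact (((hdf' (x + T)).hasDerivAt).comp_add_const x T).sub
          ((hdf' x).hasDerivAt.const_mul μ)
      rw [h1.deriv, hderivf2 (x + T), hderivf2 x, hvper x, hh]; ring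
    have hh0 : h 0 = 0 := by
      simp only [hh, hf, zero_add, h₁0, h₂0]
      have : f₁ T = α := rfl
      linear_combination hev1
    have hh0' : deriv h 0 = 0 := by
      rw [hderivh]
      simp only [hderivf, zero_add, h₁0', h₂0']
      linear_combination hev2
    have := ode2_zero (fun x => v x - E) (hv.sub continuous_const) h hdh hdh' hh2 hh0 hh0'
    intro x
    have hx : f (x + T) - μ * f x = 0 := this x
    linarith
  have hiter : ∀ (k : ℕ) (x : ℝ), f (x + k * T) = μ ^ k * f x := by
    intro k
    induction k with
    | zero => intro x; simp
    | succ k ih =>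
      intro x
      have : x + (k + 1 : ℕ) * T = (x + k * T) + T := by push_cast; ring
      rw [this, hstep, ih]; ring
  -- f is not identically 0
  have hx0 : ∃ x₀, f x₀ ≠ 0 := by
    by_contra hall
    push_neg at hall
    have ha0 : a = 0 := by have := hall 0; simpa [hf, h₁0, h₂0] using this
    have hb0 : b = 0 := by
      have hzero : deriv f 0 = 0 := by
        have : f = fun _ => (0:ℝ) := funext hall
        rw [this]; simp
      rw [hderivf] at hzero
      simpa [h₁0', h₂0'] using hzero
    rcases hab with h | h <;> [exact h ha0; exact h hb0]
  obtain ⟨x₀, hx₀⟩ := hx0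
  rintro ⟨C, hC⟩
  have hfx0pos : 0 < |f x₀| := abs_pos.2 hx₀
  obtain ⟨k, hk⟩ := pow_unbounded_of_one_lt (C / |f x₀|) hμabs
  have hlt : C < |μ| ^ k * |f x₀| := by
    rw [div_lt_iff₀ hfx0pos] at hk
    linarith
  have := hC (x₀ + k * T)
  rw [hiter k x₀, abs_mul, abs_pow] at this
  linarith
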